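/- arXiv:1910.07292 — 2 statements merged into one kernel-verified Lean document; each statement's English description precedes it below -/
import Mathlib

section
/- No certificate set in covtree is a countably infinite disjoint union of certificate sets: if cert(Γₘ) = ⨆_{i∈ℕ} cert(Γⁱ_{nᵢ}) with the union disjoint, then the union is in fact finite. Equivalently, for any node Γₘ and any countable family of pairwise incomparable nodes above Γₘ whose certificate sets do not exhaust cert(Γₘ) finitely, there exists an infinite path through Γₘ avoiding all of them. -/
/-- A finite labeled order: a partial order structure on `Fin n`. -/
abbrev FinOrd (n : ℕ) := PartialOrder (Fin n)

/-- Isomorphism of two orders on `Fin n`. -/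
def OrdIso {n : ℕ} (p q : FinOrd n) : Prop :=
  Nonempty (p.le ≃r q.le)

instance ordSetoid (n : ℕ) : Setoid (FinOrd n) where
  r := OrdIso
  iseqv := by
    refine ⟨fun p => ⟨RelIso.refl _⟩, ?_, ?_⟩
    · rintro p q ⟨e⟩; exact ⟨e.symm⟩
    · rintro p q r ⟨e⟩ ⟨f⟩; exact ⟨e.trans f⟩

/-- An `n`-order: an isomorphism class of partial orders of cardinality `n`. -/
def NOrder (n : ℕ) := Quotient (ordSetoid n)

/-- `B` (a partial order on `Fin n`) occurs as a stem (finite downward-closed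
subcauset) in the partial order `p` on `α`. -/
def StemIn {n : ℕ} {α : Type*} (B : FinOrd n) (p : PartialOrder α) : Prop :=
  ∃ f : Fin n → α, Function.Injective f ∧
    (∀ i j : Fin n, B.le i j ↔ p.le (f i) (f j)) ∧
    (∀ (i : Fin n) (y : α), p.lt y (f i) → ∃ j : Fin n, f j = y)

/-- The `n`-order `B` is a stem in the order `p`. -/
def QStemIn {n : ℕ} {α : Type*} (B : NOrder n) (p : PartialOrder α) : Prop :=
  ∃ b : FinOrd n, ⟦b⟧ = B ∧ StemIn b p

/-- The set of `k`-stems of `p`, as a set of `k`-orders. -/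
def stems (k : ℕ) {α : Type*} (p : PartialOrder α) : Set (NOrder k) :=
  {B | QStemIn B p}

/-- Stem relation between unlabeled finite orders: `S` is a stem in `T`. -/
def NStemIn {n m : ℕ} (S : NOrder n) (T : NOrder m) : Prop :=
  ∃ t : FinOrd m, ⟦t⟧ = T ∧ QStemIn S t

/-- An order is past-finite if every element has finitely many elements below it. -/
def PastFinite {α : Type*} (p : PartialOrder α) : Prop :=
  ∀ x : α, {y : α | p.lt y x}.Finite

/-- The operation sending a set of `n`-orders to the set of `(n-1)`-stems of its
elements. -/
def Ominus (n : ℕ) (Γ : Set (NOrder n)) : Set (NOrder (n - 1)) :=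
  {B | ∃ A ∈ Γ, NStemIn B A}

/-- The `j`-fold iterate of `Ominus`. -/
def OminusIter : (j : ℕ) → (n : ℕ) → Set (NOrder n) → Set (NOrder (n - j))
  | 0, _, Γ => Γ
  | j + 1, n, Γ => Ominus (n - j) (OminusIter j n Γ)

/-- `Γ` is a node of covtree at level `n`: it is nonempty and has a certificate,
i.e. a (finite or countably infinite) past-finite order whose set of `n`-stems
is exactly `Γ`. -/
def IsNode (n : ℕ) (Γ : Set (NOrder n)) : Prop :=
  Γ.Nonempty ∧ ∃ (α : Type) (p : PartialOrder α), Countable α ∧ PastFinite p ∧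
    stems n p = Γ


/-- An infinite path in covtree, starting at the root: for each `n` a node of
covtree at level `n` (a nonempty set of `n`-orders admitting a certificate),
each node being directly below the next via the `O₋` operation.  (Level `0`
carries the trivial node consisting of the empty order.) -/
structure CovPath where
  node : (n : ℕ) → Set (NOrder n)
  nonempty : ∀ n, (node n).Nonempty
  isNode : ∀ n, IsNode n (node n)
  link : ∀ n, Ominus (n + 1) (node (n + 1)) = node n

/-- A naturally labeled infinite causet: a partial order on `ℕ` in which
`i ≺ j` implies `i < j` (hence past-finite). -/
def NatCauset := {p : PartialOrder ℕ // ∀ i j : ℕ, p.lt i j → i < j}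

instance natSetoid : Setoid NatCauset where
  r p q := Nonempty (p.val.le ≃r q.val.le)
  iseqv := by
    refine ⟨fun p => ⟨RelIso.refl _⟩, ?_, ?_⟩
    · rintro p q ⟨e⟩; exact ⟨e.symm⟩
    · rintro p q r ⟨e⟩ ⟨f⟩; exact ⟨e.trans f⟩

/-- The space `Ω` of infinite orders: isomorphism classes of countable
past-finite infinite causets. -/
def InfOrd := Quotient natSetoid

/-- The set of `n`-stems of an infinite order. -/
def Nstems (n : ℕ) (C : InfOrd) : Set (NOrder n) :=
  {B | ∃ c : NatCauset, ⟦c⟧ = C ∧ QStemIn B c.val}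

/-- The stem set of an `n`-order `B`: the set of infinite orders containing `B`
as a stem. -/
def stemSet {n : ℕ} (B : NOrder n) : Set InfOrd :=
  {C | B ∈ Nstems n C}

/-- The certificate set of a set `Γ` of `n`-orders: the set of infinite orders
whose set of `n`-stems is exactly `Γ`. -/
def certSet {n : ℕ} (Γ : Set (NOrder n)) : Set InfOrd :=
  {C | Nstems n C = Γ}

/-- The rogue equivalence relation: two infinite orders are equivalent iff they
have the same `n`-stems for every `n`. -/
instance rogueSetoid : Setoid InfOrd where
  r A B := ∀ n, Nstems n A = Nstems n B
  iseqv := by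
    refine ⟨fun A n => rfl, ?_, ?_⟩
    · intro A B h n; exact (h n).symm
    · intro A B C h h' n; exact (h n).trans (h' n)

/-- The quotient `Ω/∼_R` of infinite orders by the rogue equivalence. -/
def RQuot := Quotient rogueSetoid

open scoped Classical in
/-- The distance between two infinite orders: `2⁻ⁿ` where `n` is the largest
integer such that the two orders have the same set of `n`-stems, and `0` if
they have the same stems of every cardinality. -/
noncomputable def preDist (A B : InfOrd) : ℝ :=
  if ∀ n, Nstems n A = Nstems n B then 0
  else (2 : ℝ)⁻¹ ^ sSup {k : ℕ | Nstems k A = Nstems k B}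

/-- The induced metric on the quotient `Ω/∼_R`. -/
noncomputable def rdist : RQuot → RQuot → ℝ :=
  Quotient.lift₂ preDist (by
    intro a b a' b' ha hb
    have h : ∀ k, (Nstems k a = Nstems k b) ↔ (Nstems k a' = Nstems k b') := by
      intro k; rw [ha k, hb k]
    unfold preDist
    by_cases hall : ∀ n, Nstems n a = Nstems n b
    · rw [if_pos hall, if_pos (fun n => (h n).mp (hall n))]
    · rw [if_neg hall, if_neg (fun hc => hall (fun n => (h n).mpr (hc n)))]
      congr 1
      apply congrArg
      ext k
      exact h k)

/-- The image of a certificate set in the quotient `Ω/∼_R`. -/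
def certR {n : ℕ} (Γ : Set (NOrder n)) : Set RQuot :=
  (fun C : InfOrd => (⟦C⟧ : RQuot)) '' certSet Γ

/-- The diameter of a subset of `Ω/∼_R`: the supremum of distances between its
points. -/
noncomputable def rdiam (S : Set RQuot) : ℝ :=
  sSup {r : ℝ | ∃ x ∈ S, ∃ y ∈ S, rdist x y = r}


namespace CovAux

open Function

/-- Pull back a partial order along an injective map. -/
def pullOrd {α : Type*} (p : PartialOrder α) {k : ℕ} (f : Fin k → α)
    (hf : Function.Injective f) : FinOrd k where
  le i j := p.le (f i) (f j)
  le_refl i := p.le_refl _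
  le_trans a b c h h' := p.le_trans _ _ _ h h'
  le_antisymm a b h h' := hf (p.le_antisymm _ _ h h')
  lt i j := p.lt (f i) (f j)
  lt_iff_le_not_ge a b := p.lt_iff_le_not_ge _ _

lemma pullOrd_le {α : Type*} (p : PartialOrder α) {k : ℕ} (f : Fin k → α)
    (hf : Function.Injective f) (i j : Fin k) :
    (pullOrd p f hf).le i j ↔ p.le (f i) (f j) := Iff.rfl

lemma pullOrd_lt {α : Type*} (p : PartialOrder α) {k : ℕ} (f : Fin k → α)
    (hf : Function.Injective f) (i j : Fin k) :
    (pullOrd p f hf).lt i j ↔ p.lt (f i) (f j) := by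
  rw [(pullOrd p f hf).lt_iff_le_not_ge, p.lt_iff_le_not_ge]
  exact Iff.rfl

lemma lt_iff' {α : Type*} (p : PartialOrder α) (x y : α) :
    p.lt x y ↔ p.le x y ∧ ¬ p.le y x := p.lt_iff_le_not_ge x y

/-- Stems compose. -/
lemma stemIn_trans {n m : ℕ} {γ : Type*} {B : FinOrd n} {t : FinOrd m} {p : PartialOrder γ}
    (h1 : StemIn B t) (h2 : StemIn t p) : StemIn B p := by
  obtain ⟨f, hfinj, hfiff, hfcl⟩ := h1
  obtain ⟨g, hginj, hgiff, hgcl⟩ := h2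
  refine ⟨g ∘ f, hginj.comp hfinj, ?_, ?_⟩
  · intro i j; rw [hfiff, hgiff]; rfl
  · intro i y hy
    obtain ⟨j, hj⟩ := hgcl (f i) y hy
    subst hj
    have hlt : t.lt j (f i) := by
      rw [lt_iff' t, hgiff, hgiff, ← lt_iff' p]; exact hy
    obtain ⟨k, hk⟩ := hfcl i j hlt
    exact ⟨k, by simp [hk]⟩

/-- Transport a stem along an isomorphism of ambient orders. -/
lemma stemIn_congr_right {n : ℕ} {α β : Type*} {B : FinOrd n} {p : PartialOrder α}
    {q : PartialOrder β} (e : p.le ≃r q.le) (h : StemIn B p) : StemIn B q := by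
  obtain ⟨f, hfinj, hfiff, hfcl⟩ := h
  refine ⟨fun i => e (f i), fun i j hij => hfinj (e.injective hij), ?_, ?_⟩
  · intro i j; rw [hfiff i j, ← e.map_rel_iff]
  · intro i y hy
    have hy' : p.lt (e.symm y) (f i) := by
      rw [lt_iff' p, ← e.map_rel_iff, ← e.map_rel_iff]
      simp only [RelIso.apply_symm_apply]
      rw [← lt_iff' q]; exact hy
    obtain ⟨j, hj⟩ := hfcl i _ hy'
    exact ⟨j, by show e (f j) = y; rw [hj]; exact e.apply_symm_apply y⟩

/-- Transport a stem along an isomorphism of the finite order. -/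
lemma stemIn_congr_left {n : ℕ} {α : Type*} {b b' : FinOrd n} (e : b'.le ≃r b.le)
    {p : PartialOrder α} (h : StemIn b p) : StemIn b' p := by
  obtain ⟨f, hfinj, hfiff, hfcl⟩ := h
  refine ⟨fun i => f (e i), hfinj.comp e.injective, ?_, ?_⟩
  · intro i j; rw [← hfiff, e.map_rel_iff]
  · intro i y hy
    obtain ⟨j, hj⟩ := hfcl (e i) y hy
    exact ⟨e.symm j, by simp [hj]⟩

end CovAux
namespace CovAux

/-- Every `n`-stem of an infinite natural causet extends to an `(n+1)`-stem. -/
lemma stem_extend {c : NatCauset} {n : ℕ} {B : FinOrd n} (h : StemIn B c.val) :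
    ∃ B' : FinOrd (n + 1), StemIn B' c.val ∧ StemIn B B' := by
  obtain ⟨f, hfinj, hfiff, hfcl⟩ := h
  -- pick z outside the range of f
  have hfin : (Set.range f).Finite := Set.finite_range f
  obtain ⟨z, hz⟩ := hfin.infinite_compl.nonempty
  have hz : z ∉ Set.range f := hz
  -- the set of elements ≤ z (in c) not in range f
  set s : Set ℕ := {y | c.val.le y z ∧ y ∉ Set.range f} with hs
  have hzs : z ∈ s := ⟨c.val.le_refl z, hz⟩
  set x := sInf s with hx
  have hxs : x ∈ s := Nat.sInf_mem ⟨z, hzs⟩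
  -- every element strictly below x (in c) is in the range of f
  have hpast : ∀ y, c.val.lt y x → y ∈ Set.range f := by
    intro y hy
    by_contra hyr
    have hyz : c.val.le y z := c.val.le_trans _ _ _ ((lt_iff' c.val y x).mp hy).1 hxs.1
    have : x ≤ y := Nat.sInf_le ⟨hyz, hyr⟩
    exact absurd (c.2 y x hy) (not_lt.mpr this)
  -- the extended embedding
  set f' : Fin (n + 1) → ℕ := Fin.snoc f x with hf'
  have hx_not : x ∉ Set.range f := hxs.2
  have hf'inj : Function.Injective f' := by
    intro i j hij
    rcases Fin.eq_castSucc_or_eq_last i with ⟨i', rfl⟩ | rfl <;>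
      rcases Fin.eq_castSucc_or_eq_last j with ⟨j', rfl⟩ | rfl
    · simp only [hf', Fin.snoc_castSucc] at hij
      exact congrArg Fin.castSucc (hfinj hij)
    · simp only [hf', Fin.snoc_castSucc, Fin.snoc_last] at hij
      exact absurd ⟨i', hij⟩ hx_not
    · simp only [hf', Fin.snoc_castSucc, Fin.snoc_last] at hij
      exact absurd ⟨j', hij.symm⟩ hx_not
    · rfl
  refine ⟨pullOrd c.val f' hf'inj, ⟨f', hf'inj, fun i j => Iff.rfl, ?_⟩, ?_⟩
  · -- range of f' is downward closed
    intro i y hy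
    rcases Fin.eq_castSucc_or_eq_last i with ⟨i', rfl⟩ | rfl
    · simp only [hf', Fin.snoc_castSucc] at hy
      obtain ⟨j, hj⟩ := hfcl i' y hy
      exact ⟨j.castSucc, by simp [hf', hj]⟩
    · simp only [hf', Fin.snoc_last] at hy
      obtain ⟨j, hj⟩ := hpast y hy
      exact ⟨j.castSucc, by simp [hf', hj]⟩
  · -- B is a stem in the extension, via castSucc
    refine ⟨Fin.castSucc, Fin.castSucc_injective n, ?_, ?_⟩
    · intro i j
      rw [hfiff i j]
      simp [pullOrd_le, hf', Fin.snoc_castSucc]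
    · intro i y hy
      rw [pullOrd_lt] at hy
      simp only [hf', Fin.snoc_castSucc] at hy
      rcases Fin.eq_castSucc_or_eq_last y with ⟨y', rfl⟩ | rfl
      · exact ⟨y', rfl⟩
      · simp only [hf', Fin.snoc_last] at hy
        exfalso
        have hxi : c.val.lt x (f i) := hy
        obtain ⟨j, hj⟩ := hfcl i x hxi
        exact hx_not ⟨j, hj⟩

/-- Every infinite natural causet has an `n`-stem, for every `n`. -/
lemma stem_exists (c : NatCauset) : ∀ n, ∃ B : FinOrd n, StemIn B c.val := by
  intro n
  induction n with
  | zero =>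
      refine ⟨pullOrd c.val (Fin.elim0) (fun i => i.elim0), Fin.elim0, fun i => i.elim0,
        fun i => i.elim0, fun i => i.elim0⟩
  | succ n ih =>
      obtain ⟨B, hB⟩ := ih
      obtain ⟨B', hB', _⟩ := stem_extend hB
      exact ⟨B', hB'⟩

lemma nstems_mk (n : ℕ) (c : NatCauset) : Nstems n ⟦c⟧ = stems n c.val := by
  ext B
  constructor
  · rintro ⟨c', hc', b, hb, hstem⟩
    obtain ⟨e⟩ := Quotient.exact hc'
    exact ⟨b, hb, stemIn_congr_right e hstem⟩
  · rintro ⟨b, hb, hstem⟩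
    exact ⟨c, rfl, b, hb, hstem⟩

lemma ominus_stems (n : ℕ) (c : NatCauset) :
    Ominus (n + 1) (stems (n + 1) c.val) = stems n c.val := by
  ext B
  constructor
  · rintro ⟨A, ⟨t0, ht0, hstem0⟩, t, ht, b, hb, hstem⟩
    obtain ⟨e⟩ : t ≈ t0 := Quotient.exact (ht.trans ht0.symm)
    exact ⟨b, hb, stemIn_trans (stemIn_congr_right e hstem) hstem0⟩
  · rintro ⟨b, hb, hstem⟩
    obtain ⟨b', hb', hbb'⟩ := stem_extend hstem
    exact ⟨⟦b'⟧, ⟨b', rfl, hb'⟩, b', rfl, b, hb, hbb'⟩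

lemma nstems_ominus (n : ℕ) (C : InfOrd) :
    Nstems n C = Ominus (n + 1) (Nstems (n + 1) C) := by
  induction C using Quotient.ind with
  | _ c => rw [nstems_mk, nstems_mk, ominus_stems]

lemma nstems_det {C C' : InfOrd} :
    ∀ n k, k ≤ n → Nstems n C = Nstems n C' → Nstems k C = Nstems k C' := by
  intro n
  induction n with
  | zero => intro k hk h; interval_cases k; exact h
  | succ n ih =>
      intro k hk h
      rcases Nat.eq_or_lt_of_le hk with rfl | hk'
      · exact h
      · refine ih k (Nat.lt_succ_iff.mp hk') ?_
        rw [nstems_ominus n C, nstems_ominus n C', h]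

instance : ∀ n, Finite (FinOrd n) := fun n => by
  refine Finite.of_injective (fun p => p.le) (fun p q h => PartialOrder.ext (fun a b => ?_))
  exact iff_of_eq (congrFun (congrFun h a) b)

instance (n : ℕ) : Finite (NOrder n) := Quotient.finite _

end CovAux
namespace CovAux

/-- The order `q` on `ℕ` is a natural order supported on `[0, s)`. -/
def OrdOn (s : ℕ) (q : PartialOrder ℕ) : Prop := ∀ i j : ℕ, q.lt i j → i < j ∧ j < s

/-- The finite order extracted from a stage. -/
def stageOrd (s : ℕ) (q : PartialOrder ℕ) : FinOrd s := pullOrd q Fin.val Fin.val_injective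

/-- A good stage for a branch `Δ`. -/
def GoodStage (Δ : (n : ℕ) → Set (NOrder n)) (s : ℕ) (q : PartialOrder ℕ) : Prop :=
  OrdOn s q ∧ ∃ c : NatCauset, (∀ k, k ≤ s → stems k c.val = Δ k) ∧
    StemIn (stageOrd s q) c.val

lemma stage_step (Δ : (n : ℕ) → Set (NOrder n))
    (H : ∀ n, ∃ c : NatCauset, ∀ k, k ≤ n → stems k c.val = Δ k)
    {s : ℕ} {q : PartialOrder ℕ} (hg : GoodStage Δ s q) {n : ℕ} {A : NOrder n}
    (hA : A ∈ Δ n) :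
    ∃ (s' : ℕ) (q' : PartialOrder ℕ), s ≤ s' ∧ GoodStage Δ s' q' ∧
      (∀ i j : ℕ, i < s → j < s → (q'.le i j ↔ q.le i j)) ∧
      QStemIn A (stageOrd s' q') := by
  classical
  obtain ⟨hq, c₀, hc₀, hst₀⟩ := hg
  obtain ⟨c, hc⟩ := H (s + n)
  -- transfer the current stage into the new certificate c
  have h1 : (⟦stageOrd s q⟧ : NOrder s) ∈ stems s c₀.val := ⟨_, rfl, hst₀⟩
  rw [hc₀ s le_rfl, ← hc s (by omega)] at h1
  obtain ⟨b, hb, hbstem⟩ := h1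
  have hiso : OrdIso (stageOrd s q) b := Setoid.symm (Quotient.exact hb)
  obtain ⟨e⟩ := hiso
  obtain ⟨f, hfinj, hfiff, hfcl⟩ := stemIn_congr_left (b := b) (b' := stageOrd s q) e hbstem
  -- get a representative of A as a stem of c
  have h2 : A ∈ stems n c.val := by rw [hc n (by omega)]; exact hA
  obtain ⟨a, ha, g, hginj, hgiff, hgcl⟩ := h2
  -- the combinatorics of labels
  set F : Finset ℕ := Finset.image f Finset.univ with hF
  set G : Finset ℕ := Finset.image g Finset.univ with hG
  set V : Finset ℕ := G \ F with hV
  set l : List ℕ := V.sort (· ≤ ·) with hl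
  have hlen : l.length = V.card := Finset.length_sort _
  have hVn : V.card ≤ n := le_trans (Finset.card_le_card (Finset.sdiff_subset))
    (le_trans Finset.card_image_le (by simp))
  set s' : ℕ := s + V.card with hs'
  have hss' : s ≤ s' := Nat.le_add_right _ _
  have hs'n : s' ≤ s + n := by omega
  set hfun : ℕ → ℕ := fun i =>
    if hi : i < s then f ⟨i, hi⟩ else if hk : i - s < l.length then l.get ⟨i - s, hk⟩ else 0
    with hhfun
  have hfun_lo : ∀ (i : Fin s), hfun i.val = f i := by
    intro i; simp only [hhfun, dif_pos i.isLt]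
  have hfun_hi : ∀ i, s ≤ i → i < s' → ∃ hk : i - s < l.length, hfun i = l.get ⟨i - s, hk⟩ := by
    intro i h1 h2
    have hk : i - s < l.length := by rw [hlen]; omega
    exact ⟨hk, by simp only [hhfun, dif_neg (by omega : ¬ i < s), dif_pos hk]⟩
  have hmemF : ∀ i, i < s → hfun i ∈ F := by
    intro i hi
    rw [hfun_lo ⟨i, hi⟩]
    exact Finset.mem_image.mpr ⟨⟨i, hi⟩, Finset.mem_univ _, rfl⟩
  have hmemV : ∀ i, s ≤ i → i < s' → hfun i ∈ V := by
    intro i h1 h2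
    obtain ⟨hk, hik⟩ := hfun_hi i h1 h2
    rw [hik]
    exact (Finset.mem_sort _).mp (List.get_mem l _)
  have hVF : ∀ u, u ∈ V → u ∉ F := fun u hu => (Finset.mem_sdiff.mp hu).2
  -- surjectivity onto F ∪ V
  have hsurj : ∀ u, u ∈ F ∪ V → ∃ i, i < s' ∧ hfun i = u := by
    intro u hu
    rcases Finset.mem_union.mp hu with hu | hu
    · obtain ⟨j, _, hj⟩ := Finset.mem_image.mp hu
      exact ⟨j.val, lt_of_lt_of_le j.isLt hss', by rw [hfun_lo j, hj]⟩
    · have : u ∈ l := (Finset.mem_sort _).mpr hu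
      obtain ⟨idx, hidx⟩ := List.mem_iff_get.mp this
      have h1 : s ≤ s + idx.val := by omega
      have h2 : s + idx.val < s' := by
        have h3 : (idx : ℕ) < V.card := lt_of_lt_of_le idx.isLt (le_of_eq hlen)
        omega
      obtain ⟨hk, hik⟩ := hfun_hi (s + idx.val) h1 h2
      refine ⟨s + idx.val, h2, ?_⟩
      rw [hik, ← hidx]
      congr 1
      ext
      simp
  -- injectivity on [0, s')
  have hsorted : l.SortedLT := Finset.sortedLT_sort V
  have hinj : ∀ i j, i < s' → j < s' → hfun i = hfun j → i = j := by
    intro i j hi hj hij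
    rcases lt_or_ge i s with hi' | hi' <;> rcases lt_or_ge j s with hj' | hj'
    · rw [hfun_lo ⟨i, hi'⟩, hfun_lo ⟨j, hj'⟩] at hij
      exact congrArg Fin.val (hfinj hij)
    · exact absurd (hij ▸ hmemF i hi') (hVF _ (hmemV j hj' hj))
    · exact absurd (hij ▸ hmemV i hi' hi) (fun hm => hVF _ hm (hmemF j hj'))
    · obtain ⟨hk1, he1⟩ := hfun_hi i hi' hi
      obtain ⟨hk2, he2⟩ := hfun_hi j hj' hj
      rw [he1, he2] at hij
      have := hsorted.strictMono_get.injective hij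
      have : i - s = j - s := congrArg Fin.val this
      omega
  -- naturality of the enumeration
  have hnat : ∀ i j, i < s' → j < s' → c.val.lt (hfun i) (hfun j) → i < j := by
    intro i j hi hj hlt
    rcases lt_or_ge i s with hi' | hi' <;> rcases lt_or_ge j s with hj' | hj'
    · rw [hfun_lo ⟨i, hi'⟩, hfun_lo ⟨j, hj'⟩] at hlt
      have : (stageOrd s q).lt ⟨i, hi'⟩ ⟨j, hj'⟩ := by
        rw [lt_iff' (stageOrd s q), hfiff, hfiff, ← lt_iff' c.val]; exact hlt
      have := hq i j ((pullOrd_lt q _ _ _ _).mp this)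
      exact this.1
    · omega
    · -- i ≥ s, j < s: hfun i would be below f-range, hence in F
      exfalso
      rw [hfun_lo ⟨j, hj'⟩] at hlt
      obtain ⟨k, hk⟩ := hfcl ⟨j, hj'⟩ _ hlt
      have : hfun i ∈ F := hk ▸ Finset.mem_image.mpr ⟨k, Finset.mem_univ _, rfl⟩
      exact hVF _ (hmemV i hi' hi) this
    · obtain ⟨hk1, he1⟩ := hfun_hi i hi' hi
      obtain ⟨hk2, he2⟩ := hfun_hi j hj' hj
      rw [he1, he2] at hlt
      have hnum : l.get ⟨i - s, hk1⟩ < l.get ⟨j - s, hk2⟩ := c.2 _ _ hlt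
      have := hsorted.strictMono_get.lt_iff_lt.mp hnum
      simp only [Fin.mk_lt_mk] at this
      omega
  -- downward closure of F ∪ V
  have hdc : ∀ u, u ∈ F ∪ V → ∀ y, c.val.lt y u → y ∈ F ∪ V := by
    intro u hu y hy
    rcases Finset.mem_union.mp hu with hu | hu
    · obtain ⟨j, _, hj⟩ := Finset.mem_image.mp hu
      obtain ⟨k, hk⟩ := hfcl j y (hj ▸ hy)
      exact Finset.mem_union.mpr (Or.inl (hk ▸ Finset.mem_image.mpr ⟨k, Finset.mem_univ _, rfl⟩))
    · have huG : u ∈ G := (Finset.mem_sdiff.mp hu).1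
      obtain ⟨j, _, hj⟩ := Finset.mem_image.mp huG
      obtain ⟨k, hk⟩ := hgcl j y (hj ▸ hy)
      have hyG : y ∈ G := hk ▸ Finset.mem_image.mpr ⟨k, Finset.mem_univ _, rfl⟩
      by_cases hyF : y ∈ F
      · exact Finset.mem_union.mpr (Or.inl hyF)
      · exact Finset.mem_union.mpr (Or.inr (Finset.mem_sdiff.mpr ⟨hyG, hyF⟩))
  -- the new order
  set le' : ℕ → ℕ → Prop := fun i j =>
    i = j ∨ (i < s' ∧ j < s' ∧ c.val.le (hfun i) (hfun j)) with hle'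
  set q' : PartialOrder ℕ :=
    { le := le'
      lt := fun i j => le' i j ∧ ¬ le' j i
      le_refl := fun i => Or.inl rfl
      le_trans := by
        rintro x y z (rfl | ⟨hx, hy, hxy⟩) h2
        · exact h2
        · rcases h2 with rfl | ⟨hy', hz, hyz⟩
          · exact Or.inr ⟨hx, hy, hxy⟩
          · exact Or.inr ⟨hx, hz, c.val.le_trans _ _ _ hxy hyz⟩
      le_antisymm := by
        rintro x y (rfl | ⟨hx, hy, hxy⟩) h2
        · rfl
        · rcases h2 with rfl | ⟨hy', hx', hyx⟩
          · rfl
          · exact hinj x y hx hy (c.val.le_antisymm _ _ hxy hyx)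
      lt_iff_le_not_ge := fun _ _ => Iff.rfl } with hq'
  have hq'lt : ∀ i j, q'.lt i j ↔ (le' i j ∧ ¬ le' j i) := fun i j => Iff.rfl
  have hq'lt' : ∀ i j, q'.lt i j → c.val.lt (hfun i) (hfun j) ∧ i < s' ∧ j < s' ∧ i ≠ j := by
    intro i j hij
    rw [hq'lt] at hij
    obtain ⟨h1, h2⟩ := hij
    have hne : i ≠ j := fun h => h2 (h ▸ Or.inl rfl)
    rcases h1 with rfl | ⟨hi, hj, hle⟩
    · exact absurd rfl hne
    · refine ⟨?_, hi, hj, hne⟩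
      rw [lt_iff' c.val]
      refine ⟨hle, fun hrev => h2 (Or.inr ⟨hj, hi, hrev⟩)⟩
  refine ⟨s', q', hss', ⟨?_, c, fun k hk => hc k (by omega), ?_⟩, ?_, ?_⟩
  · -- OrdOn s' q'
    intro i j hij
    obtain ⟨hlt, hi, hj, hne⟩ := hq'lt' i j hij
    exact ⟨hnat i j hi hj hlt, hj⟩
  · -- StemIn (stageOrd s' q') c.val
    refine ⟨fun i => hfun i.val, fun i j hij => Fin.ext (hinj _ _ i.isLt j.isLt hij), ?_, ?_⟩
    · intro i j
      constructor
      · rintro (hij | ⟨_, _, hle⟩)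
        · obtain rfl : i = j := Fin.ext hij
          exact c.val.le_refl _
        · exact hle
      · intro hle
        exact Or.inr ⟨i.isLt, j.isLt, hle⟩
    · intro i y hy
      have hmem : hfun i.val ∈ F ∪ V := by
        rcases lt_or_ge i.val s with hi | hi
        · exact Finset.mem_union.mpr (Or.inl (hmemF _ hi))
        · exact Finset.mem_union.mpr (Or.inr (hmemV _ hi i.isLt))
      obtain ⟨j, hj, hj'⟩ := hsurj y (hdc _ hmem y hy)
      exact ⟨⟨j, hj⟩, hj'⟩
  · -- compatibility with the old stage
    intro i j hi hj
    constructor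
    · rintro (rfl | ⟨_, _, hle⟩)
      · exact q.le_refl _
      · rw [hfun_lo ⟨i, hi⟩, hfun_lo ⟨j, hj⟩] at hle
        exact (hfiff ⟨i, hi⟩ ⟨j, hj⟩).mpr hle
    · intro hle
      refine Or.inr ⟨lt_of_lt_of_le hi hss', lt_of_lt_of_le hj hss', ?_⟩
      rw [hfun_lo ⟨i, hi⟩, hfun_lo ⟨j, hj⟩]
      exact (hfiff ⟨i, hi⟩ ⟨j, hj⟩).mp hle
  · -- A is a stem of the new stage
    have hgm : ∀ i : Fin n, ∃ j, j < s' ∧ hfun j = g i := by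
      intro i
      apply hsurj
      by_cases hgF : g i ∈ F
      · exact Finset.mem_union.mpr (Or.inl hgF)
      · refine Finset.mem_union.mpr (Or.inr (Finset.mem_sdiff.mpr ⟨?_, hgF⟩))
        exact Finset.mem_image.mpr ⟨i, Finset.mem_univ _, rfl⟩
    choose j hjlt hjval using hgm
    refine ⟨a, ha, fun i => ⟨j i, hjlt i⟩, ?_, ?_, ?_⟩
    · intro x y hxy
      apply hginj
      have hjj : j x = j y := by simpa using congrArg Fin.val hxy
      rw [← hjval x, ← hjval y, hjj]
    · intro x y
      rw [hgiff x y]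
      constructor
      · intro hle
        exact Or.inr ⟨hjlt x, hjlt y, by rw [hjval x, hjval y]; exact hle⟩
      · rintro (hxy | ⟨_, _, hle⟩)
        · have hjj : j x = j y := by simpa using hxy
          rw [← hjval x, ← hjval y, hjj]
          exact c.val.le_refl _
        · rw [hjval x, hjval y] at hle
          exact hle
    · intro i y hy
      replace hy := (pullOrd_lt _ _ _ _ _).mp hy
      obtain ⟨hlt, hys, _, _⟩ := hq'lt' _ _ hy
      rw [hjval i] at hlt
      obtain ⟨k, hk⟩ := hgcl i _ hlt
      refine ⟨k, Fin.ext (hinj _ _ (hjlt k) hys ?_)⟩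
      rw [hjval k, hk]

end CovAux

namespace CovAux

instance (n : ℕ) : Nonempty (NOrder n) := ⟨⟦(inferInstance : PartialOrder (Fin n))⟧⟩

/-- Hypothesis: `Δ` is a branch with certificates at every level. -/
def Branch (Δ : (n : ℕ) → Set (NOrder n)) : Prop :=
  ∀ n, ∃ c : NatCauset, ∀ k, k ≤ n → stems k c.val = Δ k

noncomputable section

lemma delta_ne {Δ : (n : ℕ) → Set (NOrder n)} (H : Branch Δ) (n : ℕ) :
    ∃ A : NOrder n, A ∈ Δ n := by
  obtain ⟨c, hc⟩ := H n
  obtain ⟨B, hB⟩ := stem_exists c n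
  exact ⟨⟦B⟧, by rw [← hc n le_rfl]; exact ⟨B, rfl, hB⟩⟩

/-- The type of good stages. -/
def Stg (Δ : (n : ℕ) → Set (NOrder n)) := Σ' (s : ℕ) (q : PartialOrder ℕ), GoodStage Δ s q

/-- The trivial discrete order on ℕ. -/
def eqOrd : PartialOrder ℕ where
  le := Eq
  lt i j := i = j ∧ ¬ j = i
  le_refl _ := rfl
  le_trans _ _ _ h h' := Eq.trans h h'
  le_antisymm _ _ h _ := h
  lt_iff_le_not_ge _ _ := Iff.rfl

/-- The trivial (empty) initial stage. -/
def stg0 {Δ : (n : ℕ) → Set (NOrder n)} (H : Branch Δ) : Stg Δ := by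
  refine ⟨0, eqOrd, ?_, ?_⟩
  · intro i j hij
    rw [lt_iff' eqOrd] at hij
    exact absurd hij.1 (fun h => hij.2 h.symm)
  · obtain ⟨c, hc⟩ := H 0
    exact ⟨c, hc, fun i => i.elim0, fun i => i.elim0, fun i => i.elim0, fun i => i.elim0⟩

lemma step_ex {Δ : (n : ℕ) → Set (NOrder n)} (H : Branch Δ) (st : Stg Δ)
    (r : Σ n, NOrder n) :
    ∃ st' : Stg Δ, st.1 ≤ st'.1 ∧
      (∀ i j : ℕ, i < st.1 → j < st.1 → (st'.2.1.le i j ↔ st.2.1.le i j)) ∧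
      (r.2 ∈ Δ r.1 → QStemIn r.2 (stageOrd st'.1 st'.2.1)) := by
  by_cases h : r.2 ∈ Δ r.1
  · obtain ⟨s', q', hle, hgood, hcompat, hstem⟩ := stage_step Δ H st.2.2 h
    exact ⟨⟨s', q', hgood⟩, hle, hcompat, fun _ => hstem⟩
  · exact ⟨st, le_rfl, fun _ _ _ _ => Iff.rfl, fun hm => absurd hm h⟩

variable {Δ : (n : ℕ) → Set (NOrder n)}

/-- The recursive sequence of stages. -/
def stgs (H : Branch Δ) (e : ℕ → Σ n, NOrder n) : ℕ → Stg Δ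
  | 0 => stg0 H
  | (k + 1) => (step_ex H (stgs H e k) (e k)).choose

/-- Level of a stage. -/
def sK (H : Branch Δ) (e : ℕ → Σ n, NOrder n) (k : ℕ) : ℕ := (stgs H e k).1

def qK (H : Branch Δ) (e : ℕ → Σ n, NOrder n) (k : ℕ) : PartialOrder ℕ := (stgs H e k).2.1

lemma good_stgs (H : Branch Δ) (e : ℕ → Σ n, NOrder n) (k : ℕ) :
    GoodStage Δ (sK H e k) (qK H e k) := (stgs H e k).2.2

lemma stgs_spec (H : Branch Δ) (e : ℕ → Σ n, NOrder n) (k : ℕ) :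
    sK H e k ≤ sK H e (k + 1) ∧
      (∀ i j : ℕ, i < sK H e k → j < sK H e k →
        ((qK H e (k + 1)).le i j ↔ (qK H e k).le i j)) ∧
      ((e k).2 ∈ Δ (e k).1 → QStemIn (e k).2 (stageOrd (sK H e (k + 1)) (qK H e (k + 1)))) :=
  (step_ex H (stgs H e k) (e k)).choose_spec

lemma sK_mono (H : Branch Δ) (e : ℕ → Σ n, NOrder n) {k k' : ℕ} (h : k ≤ k') :
    sK H e k ≤ sK H e k' := by
  induction k' with
  | zero => exact (Nat.le_zero.mp h) ▸ le_rfl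
  | succ k' ih =>
      rcases Nat.eq_or_lt_of_le h with rfl | h'
      · exact le_rfl
      · exact le_trans (ih (by omega)) (stgs_spec H e k').1

lemma qK_compat (H : Branch Δ) (e : ℕ → Σ n, NOrder n) {k k' : ℕ} (h : k ≤ k') {i j : ℕ}
    (hi : i < sK H e k) (hj : j < sK H e k) :
    ((qK H e k').le i j ↔ (qK H e k).le i j) := by
  induction k' with
  | zero =>
      obtain rfl : k = 0 := Nat.le_zero.mp h
      rfl
  | succ k' ih =>
      rcases Nat.eq_or_lt_of_le h with rfl | h'
      · rfl
      · have hk : k ≤ k' := by omega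
        rw [(stgs_spec H e k').2.1 i j (lt_of_lt_of_le hi (sK_mono H e hk))
          (lt_of_lt_of_le hj (sK_mono H e hk))]
        exact ih hk

lemma qK_le_ne_lt (H : Branch Δ) (e : ℕ → Σ n, NOrder n) {k i j : ℕ}
    (hle : (qK H e k).le i j) (hne : i ≠ j) : (qK H e k).lt i j := by
  rw [lt_iff' (qK H e k)]
  exact ⟨hle, fun hrev => hne ((qK H e k).le_antisymm _ _ hle hrev)⟩

lemma qK_le_bound (H : Branch Δ) (e : ℕ → Σ n, NOrder n) {k i j : ℕ}
    (hle : (qK H e k).le i j) (hne : i ≠ j) : i < j ∧ j < sK H e k :=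
  (good_stgs H e k).1 i j (qK_le_ne_lt H e hle hne)

lemma qK_up (H : Branch Δ) (e : ℕ → Σ n, NOrder n) {k k' i j : ℕ} (h : k ≤ k')
    (hle : (qK H e k).le i j) : (qK H e k').le i j := by
  by_cases hne : i = j
  · exact hne ▸ (qK H e k').le_refl i
  · obtain ⟨hij, hjk⟩ := qK_le_bound H e hle hne
    exact (qK_compat H e h (by omega) hjk).mpr hle

/-- The limit order on ℕ. -/
def dOrd (H : Branch Δ) (e : ℕ → Σ n, NOrder n) : PartialOrder ℕ where
  le i j := ∃ k, (qK H e k).le i j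
  lt i j := (∃ k, (qK H e k).le i j) ∧ ¬ (∃ k, (qK H e k).le j i)
  le_refl i := ⟨0, (qK H e 0).le_refl i⟩
  le_trans x y z := by
    rintro ⟨k1, h1⟩ ⟨k2, h2⟩
    exact ⟨max k1 k2, (qK H e _).le_trans _ _ _
      (qK_up H e (le_max_left _ _) h1) (qK_up H e (le_max_right _ _) h2)⟩
  le_antisymm x y := by
    rintro ⟨k1, h1⟩ ⟨k2, h2⟩
    exact (qK H e (max k1 k2)).le_antisymm _ _
      (qK_up H e (le_max_left _ _) h1) (qK_up H e (le_max_right _ _) h2)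
  lt_iff_le_not_ge _ _ := Iff.rfl

lemma dOrd_nat (H : Branch Δ) (e : ℕ → Σ n, NOrder n) :
    ∀ i j : ℕ, (dOrd H e).lt i j → i < j := by
  rintro i j ⟨⟨k, hk⟩, hn⟩
  have hne : i ≠ j := fun h => hn (h ▸ ⟨k, h ▸ hk⟩)
  exact (qK_le_bound H e hk hne).1

/-- The limit causet. -/
def dCau (H : Branch Δ) (e : ℕ → Σ n, NOrder n) : NatCauset := ⟨dOrd H e, dOrd_nat H e⟩

lemma dOrd_le_iff (H : Branch Δ) (e : ℕ → Σ n, NOrder n) {k i j : ℕ} (hi : i < sK H e k)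
    (hj : j < sK H e k) : ((dOrd H e).le i j ↔ (qK H e k).le i j) := by
  constructor
  · rintro ⟨k', h⟩
    exact (qK_compat H e (le_max_left k k') hi hj).mp (qK_up H e (le_max_right k k') h)
  · intro h; exact ⟨k, h⟩

lemma dOrd_lt_of_qK (H : Branch Δ) (e : ℕ → Σ n, NOrder n) {k i j : ℕ}
    (h : (qK H e k).lt i j) : (dOrd H e).lt i j := by
  rw [lt_iff' (qK H e k)] at h
  obtain ⟨hle, hnrev⟩ := h
  have hne : i ≠ j := fun hh => hnrev (hh ▸ hle)
  have hij : i < j := (qK_le_bound H e hle hne).1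
  refine ⟨⟨k, hle⟩, ?_⟩
  rintro ⟨k', hrev⟩
  by_cases hji : j = i
  · exact absurd hij (hji ▸ lt_irrefl j)
  · exact absurd (lt_trans hij (qK_le_bound H e hrev hji).1) (lt_irrefl i)

lemma stage_in_d (H : Branch Δ) (e : ℕ → Σ n, NOrder n) (k : ℕ) :
    StemIn (stageOrd (sK H e k) (qK H e k)) (dOrd H e) := by
  refine ⟨Fin.val, Fin.val_injective, ?_, ?_⟩
  · intro i j
    exact (dOrd_le_iff H e i.isLt j.isLt).symm
  · intro i y hy
    have := dOrd_nat H e y i.val hy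
    exact ⟨⟨y, lt_trans this i.isLt⟩, rfl⟩

lemma exists_limit_aux (H : Branch Δ) (e : ℕ → Σ n, NOrder n)
    (he : Function.Surjective e) : ∀ n, stems n (dCau H e).val = Δ n := by
  intro n
  apply Set.eq_of_subset_of_subset
  · -- every n-stem of d is in Δ n
    rintro B ⟨b, hb, f, hfinj, hfiff, hfcl⟩
    obtain ⟨M, hM⟩ : ∃ M, ∀ i, f i < M := by
      refine ⟨(Finset.image f Finset.univ).sup id + 1, fun i => ?_⟩
      have : f i ≤ (Finset.image f Finset.univ).sup id :=
        Finset.le_sup (f := id) (Finset.mem_image.mpr ⟨i, Finset.mem_univ _, rfl⟩)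
      omega
    -- find a stage dominating all labels
    obtain ⟨A, hA⟩ := delta_ne H (M + n)
    obtain ⟨k0, hk0⟩ := he ⟨M + n, A⟩
    have hstem := ((stgs_spec H e k0).2.2 (by rw [hk0]; exact hA))
    rw [hk0] at hstem
    have hMn : M + n ≤ sK H e (k0 + 1) := by
      obtain ⟨a, _, f', hf'inj, _, _⟩ := hstem
      have := Fintype.card_le_of_injective f' hf'inj
      simpa using this
    set k := k0 + 1 with hk
    -- b is a stem of stage k
    have hstage : StemIn b (stageOrd (sK H e k) (qK H e k)) := by
      have hflt : ∀ i : Fin n, f i < sK H e k := fun i => by have := hM i; omega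
      refine ⟨fun i => ⟨f i, hflt i⟩,
        fun i j hij => hfinj (congrArg Fin.val hij), ?_, ?_⟩
      · intro i j
        rw [hfiff i j]
        exact dOrd_le_iff H e (k := k) (i := f i) (j := f j) (hflt i) (hflt j)
      · intro i y hy
        replace hy := (pullOrd_lt _ _ _ _ _).mp hy
        have hy' : (dOrd H e).lt y.val (f i) := dOrd_lt_of_qK H e hy
        obtain ⟨j, hj⟩ := hfcl i y.val hy'
        exact ⟨j, Fin.ext (by simpa using hj)⟩
    obtain ⟨hord, c, hc, hcstem⟩ := good_stgs H e k
    have hbc : StemIn b c.val := stemIn_trans hstage hcstem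
    rw [← hc n (by omega)]
    exact ⟨b, hb, hbc⟩
  · -- every element of Δ n is an n-stem of d
    intro A hA
    obtain ⟨k0, hk0⟩ := he ⟨n, A⟩
    have hstem := (stgs_spec H e k0).2.2 (by rw [hk0]; exact hA)
    rw [hk0] at hstem
    obtain ⟨a, ha, hst⟩ := hstem
    exact ⟨a, ha, stemIn_trans hst (stage_in_d H e (k0 + 1))⟩

end

lemma exists_limit {Δ : (n : ℕ) → Set (NOrder n)} (H : Branch Δ) :
    ∃ d : NatCauset, ∀ n, stems n d.val = Δ n := by
  obtain ⟨e, he⟩ := exists_surjective_nat (Σ n, NOrder n)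
  exact ⟨dCau H e, exists_limit_aux H e he⟩

end CovAux

namespace CovAux

/-- A junk infinite order (the discrete order on ℕ). -/
def junkCau : NatCauset :=
  ⟨eqOrd, fun i j h => by
    rw [lt_iff' eqOrd] at h
    exact absurd h.1 (fun x => h.2 x.symm)⟩

end CovAux


open CovAux in
/-- No certificate set in covtree is a countably infinite
disjoint union of certificate sets: if `cert(Γₘ)` is the disjoint union of a
countable family of certificate sets of covtree nodes, then only finitely many
members of the family are nonempty, i.e. the union is in fact finite. -/
theorem no_countable_disjoint_decomposition {m : ℕ} (Γm : Set (NOrder m))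
    (hΓm : IsNode m Γm)
    (lvl : ℕ → ℕ) (Γ : (i : ℕ) → Set (NOrder (lvl i)))
    (hΓ : ∀ i, IsNode (lvl i) (Γ i))
    (hcover : certSet Γm = ⋃ i : ℕ, certSet (Γ i))
    (hdisj : Pairwise fun i j => Disjoint (certSet (Γ i)) (certSet (Γ j))) :
    {i : ℕ | (certSet (Γ i)).Nonempty}.Finite := by
  classical
  rw [← Set.not_infinite]
  intro hS
  set S := {i : ℕ | (certSet (Γ i)).Nonempty} with hSdef
  -- choose a certificate for each nonempty member
  set C : ℕ → InfOrd := fun i =>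
    if h : (certSet (Γ i)).Nonempty then h.some else ⟦junkCau⟧ with hCdef
  have hC : ∀ i ∈ S, C i ∈ certSet (Γ i) := by
    intro i hi
    have hi' : (certSet (Γ i)).Nonempty := hi
    show (if h : (certSet (Γ i)).Nonempty then h.some else ⟦junkCau⟧) ∈ _
    convert hi'.some_mem using 1
    exact dif_pos hi'
  have hCm : ∀ i ∈ S, Nstems m (C i) = Γm := by
    intro i hi
    have : C i ∈ certSet Γm := by
      rw [hcover]
      exact Set.mem_iUnion.mpr ⟨i, hC i hi⟩
    exact this
  -- pigeonhole: refine an infinite set to have constant n-stems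
  have pigeon : ∀ (T : Set ℕ), T.Infinite → ∀ (n : ℕ), ∃ T' : Set ℕ, T' ⊆ T ∧ T'.Infinite ∧
      ∀ i ∈ T', ∀ j ∈ T', Nstems n (C i) = Nstems n (C j) := by
    intro T hT n
    haveI := hT.to_subtype
    obtain ⟨v, hv⟩ := Finite.exists_infinite_fiber (fun x : T => Nstems n (C x.val))
    refine ⟨Subtype.val '' ((fun x : T => Nstems n (C x.val)) ⁻¹' {v}), ?_, ?_, ?_⟩
    · rintro _ ⟨x, _, rfl⟩; exact x.2
    · exact (Set.infinite_coe_iff.mp hv).image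
        (fun a _ b _ h => Subtype.val_injective h)
    · rintro _ ⟨x, hx, rfl⟩ _ ⟨y, hy, rfl⟩
      have hx' : Nstems n (C x.val) = v := hx
      have hy' : Nstems n (C y.val) = v := hy
      rw [hx', hy']
  have stepT : ∀ (n : ℕ) (T : {T : Set ℕ // T.Infinite ∧ T ⊆ S}),
      ∃ T' : {T : Set ℕ // T.Infinite ∧ T ⊆ S}, T'.val ⊆ T.val ∧
        ∀ i ∈ T'.val, ∀ j ∈ T'.val, Nstems n (C i) = Nstems n (C j) := by
    rintro n ⟨T, hTinf, hTS⟩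
    obtain ⟨T', hT'T, hT'inf, hT'c⟩ := pigeon T hTinf n
    exact ⟨⟨T', hT'inf, hT'T.trans hTS⟩, hT'T, hT'c⟩
  -- the decreasing chain of infinite sets
  set Tf : ℕ → {T : Set ℕ // T.Infinite ∧ T ⊆ S} := fun n =>
    Nat.rec (stepT 0 ⟨S, hS, subset_rfl⟩).choose
      (fun n prev => (stepT (n + 1) prev).choose) n with hTfdef
  have hTf0 : ∀ i ∈ (Tf 0).val, ∀ j ∈ (Tf 0).val, Nstems 0 (C i) = Nstems 0 (C j) :=
    (stepT 0 ⟨S, hS, subset_rfl⟩).choose_spec.2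
  have hTfs : ∀ n, (Tf (n + 1)).val ⊆ (Tf n).val ∧
      (∀ i ∈ (Tf (n + 1)).val, ∀ j ∈ (Tf (n + 1)).val, Nstems (n + 1) (C i) = Nstems (n + 1) (C j)) :=
    fun n => (stepT (n + 1) (Tf n)).choose_spec
  have hconst : ∀ n, ∀ i ∈ (Tf n).val, ∀ j ∈ (Tf n).val, Nstems n (C i) = Nstems n (C j) := by
    intro n
    cases n with
    | zero => exact hTf0
    | succ n => exact (hTfs n).2
  have hmono : ∀ k n, k ≤ n → (Tf n).val ⊆ (Tf k).val := by
    intro k n h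
    induction h with
    | refl => exact subset_rfl
    | step h ih => exact ((hTfs _).1).trans ih
  -- the branch
  have hpick : ∀ n, ∃ i, i ∈ (Tf n).val := fun n => (Tf n).2.1.nonempty
  choose p hp using hpick
  set Δ : (n : ℕ) → Set (NOrder n) := fun n => Nstems n (C (p n)) with hΔdef
  have hcross : ∀ n k, k ≤ n → ∀ i ∈ (Tf n).val, Nstems k (C i) = Δ k :=
    fun n k hk i hi => hconst k i (hmono k n hk hi) (p k) (hp k)
  have HB : Branch Δ := by
    intro n
    obtain ⟨c, hc⟩ := Quotient.exists_rep (C (p n))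
    refine ⟨c, fun k hk => ?_⟩
    rw [← nstems_mk k c, hc]
    exact hcross n k hk (p n) (hp n)
  obtain ⟨d, hd⟩ := exists_limit HB
  have hDn : ∀ n, Nstems n (⟦d⟧ : InfOrd) = Δ n := fun n => by rw [nstems_mk]; exact hd n
  have hDm : (⟦d⟧ : InfOrd) ∈ certSet Γm := by
    show Nstems m (⟦d⟧ : InfOrd) = Γm
    rw [hDn m]
    exact hCm (p m) ((Tf m).2.2 (hp m))
  rw [hcover] at hDm
  obtain ⟨i₀, hDU⟩ := Set.mem_iUnion.mp hDm
  have hGi₀ : Δ (lvl i₀) = Γ i₀ := by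
    rw [← hDn (lvl i₀)]
    exact hDU
  obtain ⟨j, hj⟩ := ((Tf (lvl i₀)).2.1.diff (Set.finite_singleton i₀)).nonempty
  have hjT : j ∈ (Tf (lvl i₀)).val := hj.1
  have hjne : j ≠ i₀ := by simpa using hj.2
  have hjS : j ∈ S := (Tf (lvl i₀)).2.2 hjT
  have h1 : C j ∈ certSet (Γ i₀) := by
    show Nstems (lvl i₀) (C j) = Γ i₀
    rw [hcross (lvl i₀) (lvl i₀) le_rfl j hjT]
    exact hGi₀
  exact absurd h1 (Set.disjoint_left.mp (hdisj hjne) (hC j hjS))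
end

section
/- The metric space (Ω/∼_R, d) is complete, and consequently for every infinite path {Γ₁, Γ₂, …} in covtree the nested intersection ⋂ₙ [cert(Γₙ)]_R contains exactly one point (Cantor's intersection theorem applied to the nested closed sets of vanishing diameter). -/
/-! ### Auxiliary machinery -/

section Aux

open Set Function

variable {α β : Type*} {n m k : ℕ}

private lemma ltc (p : PartialOrder α) {a b : α} : p.lt a b ↔ p.le a b ∧ ¬ p.le b a :=
  p.lt_iff_le_not_ge a b

/-- Transitivity: a stem of a stem is a stem. -/
lemma stem_trans {B : FinOrd n} {t : FinOrd m} {p : PartialOrder α}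
    (h1 : StemIn B t) (h2 : StemIn t p) : StemIn B p := by
  obtain ⟨f, hfinj, hf, hfd⟩ := h1
  obtain ⟨g, hginj, hg, hgd⟩ := h2
  refine ⟨g ∘ f, hginj.comp hfinj, fun i j => by rw [hf, hg]; rfl, ?_⟩
  intro i y hy
  obtain ⟨j, hj⟩ := hgd (f i) y hy
  subst hj
  have hlt : t.lt j (f i) := by
    rw [ltc t, hg, hg]
    exact (ltc p).1 hy
  obtain ⟨j', hj'⟩ := hfd i j hlt
  exact ⟨j', by simp [Function.comp, hj']⟩

/-- Left congruence for `StemIn`. -/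
lemma stem_congr_left {b b' : FinOrd n} {p : PartialOrder α} (e : b.le ≃r b'.le)
    (h : StemIn b' p) : StemIn b p := by
  obtain ⟨f, hfinj, hf, hfd⟩ := h
  refine ⟨f ∘ e, hfinj.comp e.injective, ?_, ?_⟩
  · intro i j
    rw [← e.map_rel_iff]
    exact hf (e i) (e j)
  · intro i y hy
    obtain ⟨j, hj⟩ := hfd (e i) y hy
    exact ⟨e.symm j, by simp [Function.comp, hj]⟩

/-- `StemIn` is invariant under isomorphism of the ambient order. -/
lemma stem_relIso {b : FinOrd n} {p : PartialOrder α} {q : PartialOrder β}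
    (e : p.le ≃r q.le) (h : StemIn b p) : StemIn b q := by
  obtain ⟨f, hfinj, hf, hfd⟩ := h
  refine ⟨(e : α → β) ∘ f, e.injective.comp hfinj, ?_, ?_⟩
  · intro i j
    rw [hf]
    exact (e.map_rel_iff).symm
  · intro i y hy
    have hy' : p.lt (e.symm y) (f i) := by
      rw [ltc p]
      constructor
      · rw [← e.map_rel_iff]
        simp only [RelIso.apply_symm_apply]
        exact ((ltc q).1 hy).1
      · intro hle
        apply ((ltc q).1 hy).2
        have := e.map_rel_iff.2 hle
        simpa using this
    obtain ⟨j, hj⟩ := hfd i (e.symm y) hy'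
    exact ⟨j, by simp [Function.comp, hj]⟩

lemma qstem_relIso {B : NOrder n} {p : PartialOrder α} {q : PartialOrder β}
    (e : p.le ≃r q.le) (h : QStemIn B p) : QStemIn B q := by
  obtain ⟨b, hb, hs⟩ := h
  exact ⟨b, hb, stem_relIso e hs⟩

lemma qstem_trans {B : NOrder n} {t : FinOrd m} {p : PartialOrder α}
    (h1 : QStemIn B t) (h2 : StemIn t p) : QStemIn B p := by
  obtain ⟨b, hb, hs⟩ := h1
  exact ⟨b, hb, stem_trans hs h2⟩

lemma Nstems_eq (n : ℕ) (c : NatCauset) : Nstems n (⟦c⟧ : InfOrd) = stems n c.val := by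
  ext B
  constructor
  · rintro ⟨c', hc', hq⟩
    obtain ⟨e⟩ := Quotient.exact hc'
    exact qstem_relIso e hq
  · intro h
    exact ⟨c, rfl, h⟩

lemma natCauset_pf (c : NatCauset) : PastFinite c.val :=
  fun x => Set.Finite.subset (Set.finite_Iio x) (fun y hy => c.prop y x hy)

/-- Pulling back an order along an injective map. -/
def pull (p : PartialOrder α) (f : Fin n → α) (hf : Function.Injective f) : FinOrd n :=
  letI := p; PartialOrder.lift f hf

lemma pull_le {p : PartialOrder α} {f : Fin n → α} {hf : Function.Injective f} {i j : Fin n} :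
    (pull p f hf).le i j ↔ p.le (f i) (f j) := Iff.rfl

lemma pull_lt {p : PartialOrder α} {f : Fin n → α} {hf : Function.Injective f} {i j : Fin n} :
    (pull p f hf).lt i j ↔ p.lt (f i) (f j) := Iff.rfl

/-- Downward-closed subset (as a predicate). -/
def DCl (p : PartialOrder α) (s : Set α) : Prop :=
  ∀ x ∈ s, ∀ y, p.lt y x → y ∈ s

lemma pull_stem {p : PartialOrder α} {f : Fin n → α} (hf : Function.Injective f)
    (hdc : DCl p (Set.range f)) : StemIn (pull p f hf) p :=
  ⟨f, hf, fun _ _ => Iff.rfl, fun i y hy => hdc (f i) ⟨i, rfl⟩ y hy⟩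

/-- A stem embedding whose range lies in the range of `g` factors as a stem of the
pull-back along `g`. -/
lemma stem_factor {b : FinOrd k} {p : PartialOrder α} {g : Fin n → α} (hg : Function.Injective g)
    {f : Fin k → α} (hfinj : Function.Injective f)
    (hf : ∀ i j, b.le i j ↔ p.le (f i) (f j))
    (hfd : ∀ (i : Fin k) (y : α), p.lt y (f i) → ∃ j, f j = y)
    (hsub : Set.range f ⊆ Set.range g) : StemIn b (pull p g hg) := by
  choose h hh using fun i => hsub (Set.mem_range_self i)
  refine ⟨h, ?_, ?_, ?_⟩
  · intro i j hij
    apply hfinj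
    rw [← hh, ← hh, hij]
  · intro i j
    rw [hf, pull_le, hh, hh]
  · intro i y hy
    rw [pull_lt, hh] at hy
    obtain ⟨j, hj⟩ := hfd i (g y) hy
    refine ⟨j, hg ?_⟩
    rw [hh, hj]

/-- Enumerate a finite set respecting a linear extension of `p`. -/
lemma linEnum (p : PartialOrder α) :
    ∀ (n : ℕ) (s : Set α), s.Finite → s.ncard = n →
    ∃ g : Fin n → α, Function.Injective g ∧ Set.range g = s ∧
      ∀ a b : Fin n, p.lt (g a) (g b) → (a : ℕ) < (b : ℕ) := by
  intro n
  induction n with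
  | zero =>
    intro s hs hc
    rw [Set.ncard_eq_zero hs] at hc
    refine ⟨Fin.elim0, fun a => a.elim0, ?_, fun a => a.elim0⟩
    rw [hc]
    exact Set.range_eq_empty _
  | succ n ih =>
    intro s hs hc
    have hne : s.Nonempty := by
      rw [Set.nonempty_iff_ne_empty]
      intro h
      rw [h] at hc
      simp at hc
    obtain ⟨x, hx, hmax⟩ := letI := p; Set.Finite.exists_maximalFor id s hs hne
    have hcard' : (s \ {x}).ncard = n := by
      rw [Set.ncard_diff_singleton_of_mem hx, hc]
      omega
    obtain ⟨g', hg'inj, hg'r, hg'lt⟩ := ih (s \ {x}) hs.diff hcard'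
    have hg'mem : ∀ i, g' i ∈ s \ {x} := fun i => hg'r ▸ Set.mem_range_self i
    have hg'ne : ∀ i, g' i ≠ x := fun i => by
      have := (hg'mem i).2
      simpa using this
    refine ⟨fun i => if h : (i : ℕ) < n then g' ⟨i, h⟩ else x, ?_, ?_, ?_⟩
    · intro i j hij
      by_cases hi : (i : ℕ) < n <;> by_cases hj : (j : ℕ) < n
      · simp only [dif_pos hi, dif_pos hj] at hij
        have := congrArg Fin.val (hg'inj hij)
        apply Fin.ext
        simpa using this
      · simp only [dif_pos hi, dif_neg hj] at hij
        exact absurd hij (hg'ne _)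
      · simp only [dif_neg hi, dif_pos hj] at hij
        exact absurd hij.symm (hg'ne _)
      · apply Fin.ext; omega
    · apply Set.eq_of_subset_of_subset
      · rintro _ ⟨i, rfl⟩
        by_cases hi : (i : ℕ) < n
        · simp only [dif_pos hi]
          exact (hg'mem ⟨i, hi⟩).1
        · simp only [dif_neg hi]
          exact hx
      · intro y hy
        by_cases hyx : y = x
        · refine ⟨⟨n, by omega⟩, ?_⟩
          show (if h : n < n then g' ⟨n, h⟩ else x) = y
          rw [dif_neg (lt_irrefl n), hyx]
        · have hmem : y ∈ s \ {x} := ⟨hy, hyx⟩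
          rw [← hg'r] at hmem
          obtain ⟨i, rfl⟩ := hmem
          refine ⟨⟨(i : ℕ), by omega⟩, ?_⟩
          show (if h : (i:ℕ) < n then g' ⟨(i:ℕ), h⟩ else x) = g' i
          rw [dif_pos i.isLt]
    · intro a b hab
      by_cases ha : (a : ℕ) < n <;> by_cases hb : (b : ℕ) < n
      · simp only [dif_pos ha, dif_pos hb] at hab
        exact hg'lt _ _ hab
      · omega
      · exfalso
        simp only [dif_neg ha, dif_pos hb] at hab
        have h1 := hmax (hg'mem ⟨(b : ℕ), hb⟩).1 ((ltc p).1 hab).1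
        simp only [id] at h1
        exact ((ltc p).1 hab).2 h1
      · simp only [dif_neg ha, dif_neg hb] at hab
        exact absurd (p.le_refl x) ((ltc p).1 hab).2

end Aux
section AuxB

open Set Function

variable {α β : Type*} {n m k : ℕ}

lemma ncard_range {f : Fin n → α} (hf : Function.Injective f) : (Set.range f).ncard = n := by
  rw [← Set.image_univ, Set.ncard_image_of_injective _ hf, Set.ncard_univ, Nat.card_eq_fintype_card,
    Fintype.card_fin]

/-- One-step extension of a downward-closed finite set in a past-finite order. -/
lemma extend_one (p : PartialOrder α) (hpf : PastFinite p) (s : Set α)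
    (hdc : DCl p s) (hproper : sᶜ.Nonempty) :
    ∃ x ∉ s, DCl p (insert x s) := by
  obtain ⟨y₀, hy₀⟩ := hproper
  have hTsub : {y | y ∉ s ∧ p.le y y₀} ⊆ insert y₀ {y | p.lt y y₀} := by
    intro y hy
    by_cases hyy : y = y₀
    · exact Set.mem_insert_iff.2 (Or.inl hyy)
    · refine Set.mem_insert_iff.2 (Or.inr ?_)
      rw [Set.mem_setOf_eq, ltc]
      exact ⟨hy.2, fun hle => hyy (p.le_antisymm y y₀ hy.2 hle)⟩
  have hTfin : {y | y ∉ s ∧ p.le y y₀}.Finite :=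
    Set.Finite.subset ((hpf y₀).insert y₀) hTsub
  have hTne : {y | y ∉ s ∧ p.le y y₀}.Nonempty := ⟨y₀, hy₀, p.le_refl y₀⟩
  obtain ⟨x, hxT, hxmin⟩ := letI := p; Set.Finite.exists_minimalFor id _ hTfin hTne
  refine ⟨x, hxT.1, ?_⟩
  intro z hz y hy
  rcases Set.mem_insert_iff.1 hz with hzx | hzs
  · subst hzx
    by_cases hys : y ∈ s
    · exact Set.mem_insert_of_mem _ hys
    · exfalso
      have hyT : y ∈ {y | y ∉ s ∧ p.le y y₀} :=
        ⟨hys, p.le_trans _ _ _ ((ltc p).1 hy).1 hxT.2⟩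
      have := hxmin hyT ((ltc p).1 hy).1
      simp only [id] at this
      exact ((ltc p).1 hy).2 this
  · exact Set.mem_insert_of_mem _ (hdc z hzs y hy)

/-- Extension of downward-closed finite sets up to any cardinality realizable in `α`. -/
lemma extendDC (p : PartialOrder α) (hpf : PastFinite p) (M : ℕ) :
    ∀ (d : ℕ) (s : Set α), s.Finite → DCl p s → s.ncard + d = M →
      (∃ f : Fin M → α, Function.Injective f) →
      ∃ s', s ⊆ s' ∧ s'.Finite ∧ DCl p s' ∧ s'.ncard = M := by
  intro d
  induction d with
  | zero =>
    intro s hs hdc hcard _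
    exact ⟨s, subset_rfl, hs, hdc, by omega⟩
  | succ d ih =>
    rintro s hs hdc hcard ⟨f, hf⟩
    have hproper : sᶜ.Nonempty := by
      by_contra h
      rw [Set.not_nonempty_iff_eq_empty, Set.compl_empty_iff] at h
      have h1 : (Set.range f).ncard ≤ s.ncard :=
        Set.ncard_le_ncard (by rw [h]; exact Set.subset_univ _) hs
      rw [ncard_range hf] at h1
      omega
    obtain ⟨x, hxs, hdc'⟩ := extend_one p hpf s hdc hproper
    have hcard' : (insert x s).ncard + d = M := by
      rw [Set.ncard_insert_of_notMem hxs hs]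
      omega
    obtain ⟨s', h1, h2, h3, h4⟩ := ih (insert x s) (hs.insert x) hdc' hcard' ⟨f, hf⟩
    exact ⟨s', (Set.subset_insert x s).trans h1, h2, h3, h4⟩

lemma stems_nonempty (p : PartialOrder α) (hpf : PastFinite p) (k : ℕ)
    (hinj : ∃ f : Fin k → α, Function.Injective f) : (stems k p).Nonempty := by
  obtain ⟨s', _, hfin, hdc, hcard⟩ :=
    extendDC p hpf k k ∅ Set.finite_empty (fun x hx => absurd hx (Set.notMem_empty x))
      (by simp) hinj
  obtain ⟨g, hg, hrange, _⟩ := linEnum p k s' hfin hcard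
  exact ⟨⟦pull p g hg⟧, pull p g hg, rfl, pull_stem hg (hrange ▸ hdc)⟩

lemma natCauset_inj (k : ℕ) : ∃ f : Fin k → ℕ, Function.Injective f :=
  ⟨Fin.val, Fin.val_injective⟩

/-- The fundamental identity: `O₋` of the `(k+1)`-stems is the set of `k`-stems. -/
lemma ominus_stems (p : PartialOrder α) (hpf : PastFinite p) {k : ℕ}
    (hne : (stems (k+1) p).Nonempty) :
    Ominus (k+1) (stems (k+1) p) = stems k p := by
  apply Set.eq_of_subset_of_subset
  · rintro B ⟨A, hA, t, ht, hq⟩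
    obtain ⟨t', ht', hst'⟩ := hA
    obtain ⟨e⟩ := Quotient.exact (ht'.trans ht.symm)
    exact qstem_trans hq (stem_congr_left e.symm hst')
  · rintro B ⟨b, hb, f, hfinj, hf, hfd⟩
    have hdc : DCl p (Set.range f) := by
      rintro x ⟨i, rfl⟩ y hy
      exact hfd i y hy
    obtain ⟨A, hA⟩ := hne
    obtain ⟨t0, _, F, hFinj, _, _⟩ := hA
    obtain ⟨s', hsub, hfin, hdc', hcard⟩ :=
      extendDC p hpf (k+1) 1 (Set.range f) (Set.finite_range f) hdc
        (by rw [ncard_range hfinj]) ⟨F, hFinj⟩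
    obtain ⟨g, hg, hrange, _⟩ := linEnum p (k+1) s' hfin hcard
    refine ⟨⟦pull p g hg⟧, ⟨pull p g hg, rfl, pull_stem hg (hrange ▸ hdc')⟩,
      pull p g hg, rfl, b, hb, ?_⟩
    exact stem_factor hg hfinj hf hfd (by rw [hrange]; exact hsub)

lemma nstems_zero (C : InfOrd) (B : NOrder 0) : B ∈ Nstems 0 C := by
  obtain ⟨c, hc⟩ := Quotient.exists_rep C
  obtain ⟨b, hb⟩ := Quotient.exists_rep B
  exact ⟨c, hc, b, hb, Fin.elim0, fun a => a.elim0, fun i => i.elim0, fun i => i.elim0⟩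

lemma natCauset_stems_nonempty (c : NatCauset) (k : ℕ) : (stems k c.val).Nonempty :=
  stems_nonempty c.val (natCauset_pf c) k (natCauset_inj k)

lemma nstems_ominus (k : ℕ) (C : InfOrd) :
    Ominus (k+1) (Nstems (k+1) C) = Nstems k C := by
  obtain ⟨c, hc⟩ := Quotient.exists_rep C
  rw [← hc, Nstems_eq, Nstems_eq]
  exact ominus_stems c.val (natCauset_pf c) (natCauset_stems_nonempty c (k+1))

lemma agree_lower {A B : InfOrd} :
    ∀ {j : ℕ}, Nstems j A = Nstems j B → ∀ i ≤ j, Nstems i A = Nstems i B := by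
  intro j
  induction j with
  | zero =>
    intro h i hi
    have : i = 0 := by omega
    subst this
    exact h
  | succ j ih =>
    intro h i hi
    rcases Nat.eq_or_lt_of_le hi with h' | h'
    · subst h'; exact h
    · refine ih ?_ i (by omega)
      rw [← nstems_ominus j A, ← nstems_ominus j B, h]

end AuxB
section AuxC

open Set Function

variable {α β : Type*} {n m k : ℕ}

def rst (n : ℕ) : RQuot → Set (NOrder n) := Quotient.lift (Nstems n) (fun _ _ h => h n)

lemma rst_mk (n : ℕ) (A : InfOrd) : rst n (⟦A⟧ : RQuot) = Nstems n A := rfl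

lemma rdist_mk (A B : InfOrd) : rdist (⟦A⟧ : RQuot) (⟦B⟧ : RQuot) = preDist A B := rfl

lemma nstems_zero_eq (A B : InfOrd) : Nstems 0 A = Nstems 0 B :=
  Set.ext fun x => iff_of_true (nstems_zero A x) (nstems_zero B x)

lemma agree_bdd {A B : InfOrd} (hall : ¬ ∀ m, Nstems m A = Nstems m B) :
    BddAbove {k | Nstems k A = Nstems k B} := by
  push_neg at hall
  obtain ⟨t, ht⟩ := hall
  refine ⟨t, fun j hj => ?_⟩
  by_contra hle
  push_neg at hle
  exact ht (agree_lower hj t (le_of_lt hle))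

lemma preDist_lt_imp {A B : InfOrd} {n : ℕ} (h : preDist A B < (2:ℝ)⁻¹ ^ n) :
    ∀ k ≤ n, Nstems k A = Nstems k B := by
  intro k hk
  by_cases hall : ∀ m, Nstems m A = Nstems m B
  · exact hall k
  · have hne : {k | Nstems k A = Nstems k B}.Nonempty := ⟨0, nstems_zero_eq A B⟩
    have hbdd := agree_bdd hall
    have hmem := Nat.sSup_mem hne hbdd
    unfold preDist at h
    rw [if_neg hall] at h
    have hlt : n < sSup {k | Nstems k A = Nstems k B} :=
      (pow_lt_pow_iff_right_of_lt_one₀ (by norm_num) (by norm_num)).1 h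
    exact agree_lower hmem k (by omega)

lemma preDist_le {A B : InfOrd} {n : ℕ} (h : ∀ k ≤ n, Nstems k A = Nstems k B) :
    preDist A B ≤ (2:ℝ)⁻¹ ^ n := by
  unfold preDist
  split_ifs with hall
  · positivity
  · have hbdd := agree_bdd hall
    have hle : n ≤ sSup {k | Nstems k A = Nstems k B} := le_csSup hbdd (h n le_rfl)
    exact pow_le_pow_of_le_one (by norm_num) (by norm_num) hle

lemma countable_norder (n : ℕ) : Countable (NOrder n) := by
  have h : Function.Injective (fun q : FinOrd n => q.le) := by
    intro a b hab
    exact PartialOrder.ext (fun x y => iff_of_eq (congrFun (congrFun hab x) y))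
  haveI : Countable (FinOrd n) := h.countable
  exact (inferInstance : Countable (Quotient (ordSetoid n)))

lemma countable_sigma_norder : Countable (Σ n : ℕ, NOrder n) := by
  haveI : ∀ n, Countable (NOrder n) := countable_norder
  exact inferInstance

/-- The key hypothesis: every finite level pattern `Γ k`, `k ≤ N`, is simultaneously
certified by a single past-finite order. -/
def HypH (Γ : ∀ n, Set (NOrder n)) : Prop :=
  ∀ N : ℕ, ∃ (α : Type) (p : PartialOrder α), PastFinite p ∧ ∀ k ≤ N, stems k p = Γ k

lemma down {Γ : ∀ n, Set (NOrder n)} (hH : HypH Γ) {n M : ℕ} (hnM : n ≤ M) (t : FinOrd M)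
    (ht : (⟦t⟧ : NOrder M) ∈ Γ M) {B : NOrder n} (hB : QStemIn B t) : B ∈ Γ n := by
  obtain ⟨α, p, hpf, hst⟩ := hH M
  have h1 : (⟦t⟧ : NOrder M) ∈ stems M p := by rw [hst M le_rfl]; exact ht
  obtain ⟨t', ht', hstem⟩ := h1
  obtain ⟨e⟩ := Quotient.exact ht'
  have h2 : StemIn t p := stem_congr_left e.symm hstem
  rw [← hst n hnM]
  exact qstem_trans hB h2

/-- A state in the recursive construction of the limit causet. -/
structure RState (Γ : ∀ n, Set (NOrder n)) where
  m : ℕ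
  q : FinOrd m
  mem : (⟦q⟧ : NOrder m) ∈ Γ m
  nat : ∀ i j : Fin m, q.lt i j → (i : ℕ) < (j : ℕ)

/-- `b` extends `a` as a labeled stem. -/
def StExt {Γ : ∀ n, Set (NOrder n)} (a b : RState Γ) : Prop :=
  a.m ≤ b.m ∧ ∀ (i j : ℕ) (hi : i < a.m) (hj : j < a.m) (hi' : i < b.m) (hj' : j < b.m),
    (a.q.le ⟨i, hi⟩ ⟨j, hj⟩ ↔ b.q.le ⟨i, hi'⟩ ⟨j, hj'⟩)

lemma stext_refl {Γ : ∀ n, Set (NOrder n)} (a : RState Γ) : StExt a a :=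
  ⟨le_rfl, fun _ _ _ _ _ _ => Iff.rfl⟩

lemma stext_trans {Γ : ∀ n, Set (NOrder n)} {a b c : RState Γ}
    (h1 : StExt a b) (h2 : StExt b c) : StExt a c :=
  ⟨h1.1.trans h2.1, fun i j hi hj hi' hj' =>
    (h1.2 i j hi hj (lt_of_lt_of_le hi h1.1) (lt_of_lt_of_le hj h1.1)).trans
      (h2.2 i j (lt_of_lt_of_le hi h1.1) (lt_of_lt_of_le hj h1.1) hi' hj')⟩

lemma step_ex {Γ : ∀ n, Set (NOrder n)} (hH : HypH Γ) (hne : ∀ n, (Γ n).Nonempty)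
    (a : RState Γ) (n : ℕ) (B : NOrder n) (hB : B ∈ Γ n) :
    ∃ b : RState Γ, b.m = a.m + n + 1 ∧ StExt a b ∧ QStemIn B b.q := by
  set N := a.m + n + 1 with hN
  obtain ⟨α, p, hpf, hst⟩ := hH N
  -- a stem embedding of `a.q` in `p`
  have ha : (⟦a.q⟧ : NOrder a.m) ∈ stems a.m p := by
    rw [hst a.m (by omega)]; exact a.mem
  obtain ⟨q0, hq0, hq0s⟩ := ha
  obtain ⟨e0⟩ := Quotient.exact hq0
  obtain ⟨f, hfinj, hf, hfd⟩ := stem_congr_left e0.symm hq0s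
  -- a stem embedding of a representative of `B` in `p`
  have hb : B ∈ stems n p := by rw [hst n (by omega)]; exact hB
  obtain ⟨b0, hb0, g, hginj, hg, hgd⟩ := hb
  -- an injection witnessing `|α| ≥ N`
  obtain ⟨AN, hAN⟩ := hne N
  rw [← hst N le_rfl] at hAN
  obtain ⟨tN, -, F, hFinj, -, -⟩ := hAN
  -- extend the union of the two stems to a downward-closed set of size exactly N
  have hdc0 : DCl p (Set.range f ∪ Set.range g) := by
    rintro x (⟨i, rfl⟩ | ⟨i, rfl⟩) y hy
    · exact Or.inl (hfd i y hy)
    · exact Or.inr (hgd i y hy)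
  have hcard0 : (Set.range f ∪ Set.range g).ncard +
      (N - (Set.range f ∪ Set.range g).ncard) = N := by
    have h1 := Set.ncard_union_le (Set.range f) (Set.range g)
    rw [ncard_range hfinj, ncard_range hginj] at h1
    omega
  obtain ⟨s', hsub, hfin, hdc', hcard⟩ :=
    extendDC p hpf N _ _ ((Set.finite_range f).union (Set.finite_range g)) hdc0 hcard0
      ⟨F, hFinj⟩
  have hfs : Set.range f ⊆ s' := fun x hx => hsub (Or.inl hx)
  have hgs : Set.range g ⊆ s' := fun x hx => hsub (Or.inr hx)
  -- enumerate the new elements along a linear extension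
  have hcard'' : (s' \ Set.range f).ncard = n + 1 := by
    rw [Set.ncard_diff hfs (Set.finite_range f), hcard, ncard_range hfinj]
    omega
  obtain ⟨gl, hglinj, hglr, hgllt⟩ := linEnum p (n+1) _ hfin.diff hcard''
  have glmem : ∀ j, gl j ∈ s' \ Set.range f := fun j => hglr ▸ Set.mem_range_self j
  -- the combined enumeration
  set e : Fin N → α := fun i =>
    if h : (i : ℕ) < a.m then f ⟨(i : ℕ), h⟩
    else gl ⟨(i : ℕ) - a.m, by have := i.isLt; omega⟩ with he
  have heinj : Function.Injective e := by
    intro i j hij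
    by_cases hi : (i:ℕ) < a.m <;> by_cases hj : (j:ℕ) < a.m
    · simp only [he, dif_pos hi, dif_pos hj] at hij
      have := congrArg Fin.val (hfinj hij)
      apply Fin.ext; simpa using this
    · simp only [he, dif_pos hi, dif_neg hj] at hij
      exact absurd (Set.mem_range.2 ⟨⟨(i:ℕ), hi⟩, hij⟩) (glmem _).2
    · simp only [he, dif_neg hi, dif_pos hj] at hij
      exact absurd (Set.mem_range.2 ⟨⟨(j:ℕ), hj⟩, hij.symm⟩) (glmem _).2
    · simp only [he, dif_neg hi, dif_neg hj] at hij
      have := congrArg Fin.val (hglinj hij)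
      apply Fin.ext
      have h2 : (i:ℕ) - a.m = (j:ℕ) - a.m := this
      omega
  have herange : Set.range e = s' := by
    apply Set.eq_of_subset_of_subset
    · rintro _ ⟨i, rfl⟩
      by_cases hi : (i:ℕ) < a.m
      · simp only [he, dif_pos hi]
        exact hfs (Set.mem_range_self _)
      · simp only [he, dif_neg hi]
        exact (glmem _).1
    · intro y hy
      by_cases hyf : y ∈ Set.range f
      · obtain ⟨i, rfl⟩ := hyf
        refine ⟨⟨(i:ℕ), by have := i.isLt; omega⟩, ?_⟩
        show (if h : (i:ℕ) < a.m then f ⟨(i:ℕ), h⟩ else _) = f i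
        rw [dif_pos i.isLt]
      · have hmem : y ∈ s' \ Set.range f := ⟨hy, hyf⟩
        rw [← hglr] at hmem
        obtain ⟨j, rfl⟩ := hmem
        refine ⟨⟨a.m + (j:ℕ), by have := j.isLt; omega⟩, ?_⟩
        show (if h : a.m + (j:ℕ) < a.m then f ⟨a.m + (j:ℕ), h⟩
          else gl ⟨a.m + (j:ℕ) - a.m, _⟩) = gl j
        rw [dif_neg (by omega)]
        exact congrArg gl (by apply Fin.ext; show a.m + (j:ℕ) - a.m = (j:ℕ); omega)
  have hmem' : (⟦pull p e heinj⟧ : NOrder N) ∈ Γ N := by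
    rw [← hst N le_rfl]
    exact ⟨pull p e heinj, rfl, pull_stem heinj (herange ▸ hdc')⟩
  have hnat : ∀ i j : Fin N, (pull p e heinj).lt i j → (i : ℕ) < (j : ℕ) := by
    intro i j hij
    rw [pull_lt] at hij
    by_cases hi : (i:ℕ) < a.m <;> by_cases hj : (j:ℕ) < a.m
    · simp only [he, dif_pos hi, dif_pos hj] at hij
      have hlt : a.q.lt ⟨(i:ℕ), hi⟩ ⟨(j:ℕ), hj⟩ :=
        (ltc a.q).2 ⟨(hf _ _).2 ((ltc p).1 hij).1,
          fun hle => ((ltc p).1 hij).2 ((hf _ _).1 hle)⟩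
      exact a.nat _ _ hlt
    · omega
    · exfalso
      simp only [he, dif_neg hi, dif_pos hj] at hij
      obtain ⟨i', hi'⟩ := hfd _ _ hij
      exact (glmem _).2 (Set.mem_range.2 ⟨i', hi'⟩)
    · simp only [he, dif_neg hi, dif_neg hj] at hij
      have h2 : (i:ℕ) - a.m < (j:ℕ) - a.m := hgllt _ _ hij
      omega
  refine ⟨⟨N, pull p e heinj, hmem', hnat⟩, rfl, ⟨by simp only; omega, ?_⟩, ?_⟩
  · intro i j hi hj hi' hj'
    have e1 : e ⟨i, hi'⟩ = f ⟨i, hi⟩ := by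
      show (if h : i < a.m then f ⟨i, h⟩ else _) = f ⟨i, hi⟩
      rw [dif_pos hi]
    have e2 : e ⟨j, hj'⟩ = f ⟨j, hj⟩ := by
      show (if h : j < a.m then f ⟨j, h⟩ else _) = f ⟨j, hj⟩
      rw [dif_pos hj]
    show a.q.le ⟨i, hi⟩ ⟨j, hj⟩ ↔ (pull p e heinj).le ⟨i, hi'⟩ ⟨j, hj'⟩
    rw [hf, pull_le, e1, e2]
  · exact ⟨b0, hb0, stem_factor heinj hginj hg hgd (by rw [herange]; exact hgs)⟩

end AuxC
section Realize

open Set Function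

theorem realize (Γ : ∀ n, Set (NOrder n)) (hne : ∀ n, (Γ n).Nonempty) (hH : HypH Γ) :
    ∃ c : NatCauset, ∀ n, Nstems n (⟦c⟧ : InfOrd) = Γ n := by
  classical
  haveI := countable_sigma_norder
  haveI hcnt : Countable {x : Σ n : ℕ, NOrder n // x.2 ∈ Γ x.1} := inferInstance
  haveI hnon : Nonempty {x : Σ n : ℕ, NOrder n // x.2 ∈ Γ x.1} := by
    obtain ⟨B0, hB0⟩ := hne 0
    exact ⟨⟨⟨0, B0⟩, hB0⟩⟩
  obtain ⟨τ, hτ⟩ := exists_surjective_nat {x : Σ n : ℕ, NOrder n // x.2 ∈ Γ x.1}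
  obtain ⟨B0, hB0⟩ := hne 0
  obtain ⟨b0, hb0⟩ := Quotient.exists_rep B0
  let s0 : RState Γ := ⟨0, b0, by rw [hb0]; exact hB0, fun i => i.elim0⟩
  let chain : ℕ → RState Γ := fun k =>
    Nat.rec s0 (fun k sk => Classical.choose (step_ex hH hne sk (τ k).1.1 (τ k).1.2 (τ k).2)) k
  have hchain : ∀ k, ((chain (k+1)).m = (chain k).m + (τ k).1.1 + 1) ∧
      StExt (chain k) (chain (k+1)) ∧ QStemIn (τ k).1.2 (chain (k+1)).q := fun k =>
    Classical.choose_spec (step_ex hH hne (chain k) (τ k).1.1 (τ k).1.2 (τ k).2)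
  have hmono : ∀ k, (chain k).m < (chain (k+1)).m := fun k => by
    have := (hchain k).1; omega
  have hsm : StrictMono (fun k => (chain k).m) := strictMono_nat_of_lt_succ hmono
  have hge : ∀ k, k ≤ (chain k).m := fun k => hsm.le_apply
  have hext : ∀ k l, k ≤ l → StExt (chain k) (chain l) := by
    intro k l hkl
    induction l, hkl using Nat.le_induction with
    | base => exact stext_refl _
    | succ l hkl ih => exact stext_trans ih (hchain l).2.1
  let cle : ℕ → ℕ → Prop := fun i j =>
    ∃ (k : ℕ) (hi : i < (chain k).m) (hj : j < (chain k).m), (chain k).q.le ⟨i, hi⟩ ⟨j, hj⟩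
  have cle_iff : ∀ (k i j) (hi : i < (chain k).m) (hj : j < (chain k).m),
      cle i j ↔ (chain k).q.le ⟨i, hi⟩ ⟨j, hj⟩ := by
    intro k i j hi hj
    constructor
    · rintro ⟨k', hi', hj', h⟩
      rcases le_total k k' with hkk | hkk
      · exact ((hext k k' hkk).2 i j hi hj hi' hj').2 h
      · exact ((hext k' k hkk).2 i j hi' hj' hi hj).1 h
    · intro h
      exact ⟨k, hi, hj, h⟩
  have hcov : ∀ i : ℕ, i < (chain (i+1)).m :=
    fun i => lt_of_lt_of_le (Nat.lt_succ_self i) (hge (i+1))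
  let climit : PartialOrder ℕ :=
    { le := cle
      lt := fun i j => cle i j ∧ ¬ cle j i
      lt_iff_le_not_ge := fun _ _ => Iff.rfl
      le_refl := fun i => ⟨i+1, hcov i, hcov i, (chain (i+1)).q.le_refl _⟩
      le_trans := by
        intro i j l hij hjl
        obtain ⟨k1, hi1, hj1, -⟩ := id hij
        obtain ⟨k2, hj2, hl2, -⟩ := id hjl
        have hK1 : k1 ≤ max k1 k2 := le_max_left _ _
        have hK2 : k2 ≤ max k1 k2 := le_max_right _ _
        have hi : i < (chain (max k1 k2)).m := lt_of_lt_of_le hi1 (hsm.monotone hK1)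
        have hj : j < (chain (max k1 k2)).m := lt_of_lt_of_le hj1 (hsm.monotone hK1)
        have hl : l < (chain (max k1 k2)).m := lt_of_lt_of_le hl2 (hsm.monotone hK2)
        have h1 := (cle_iff _ i j hi hj).1 hij
        have h2 := (cle_iff _ j l hj hl).1 hjl
        exact (cle_iff _ i l hi hl).2 ((chain _).q.le_trans _ _ _ h1 h2)
      le_antisymm := by
        intro i j hij hji
        obtain ⟨k1, hi1, hj1, h1⟩ := hij
        have h2 := (cle_iff k1 j i hj1 hi1).1 hji
        have h3 := (chain k1).q.le_antisymm _ _ h1 h2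
        exact congrArg Fin.val h3 }
  have cnat : ∀ i j : ℕ, climit.lt i j → i < j := by
    intro i j hij
    have h1 : cle i j ∧ ¬ cle j i := (ltc climit).1 hij
    set K := max i j + 1 with hK
    have hi : i < (chain K).m :=
      lt_of_lt_of_le (Nat.lt_succ_of_le (le_max_left i j)) (hge K)
    have hj : j < (chain K).m :=
      lt_of_lt_of_le (Nat.lt_succ_of_le (le_max_right i j)) (hge K)
    have h2 : (chain K).q.lt ⟨i, hi⟩ ⟨j, hj⟩ :=
      (ltc _).2 ⟨(cle_iff K i j hi hj).1 h1.1, fun hle => h1.2 ((cle_iff K j i hj hi).2 hle)⟩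
    exact (chain K).nat _ _ h2
  have chain_stem : ∀ k, StemIn (chain k).q climit := by
    intro k
    refine ⟨fun i => (i : ℕ), fun i j h => Fin.ext h, ?_, ?_⟩
    · intro i j
      exact (cle_iff k (i:ℕ) (j:ℕ) i.isLt j.isLt).symm
    · intro i y hy
      have hlt : y < (i:ℕ) := cnat y (i:ℕ) hy
      exact ⟨⟨y, lt_trans hlt i.isLt⟩, rfl⟩
  have main : ∀ n, stems n climit = Γ n := by
    intro n
    apply Set.eq_of_subset_of_subset
    · rintro B ⟨b, hb, f, hfinj, hf, hfd⟩
      set K := (Finset.univ.sup fun i : Fin n => f i) + 1 with hK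
      have hfK : ∀ i, f i < (chain K).m := by
        intro i
        have h1 : f i ≤ Finset.univ.sup fun i : Fin n => f i := Finset.le_sup (Finset.mem_univ i)
        exact lt_of_lt_of_le (by omega) (hge K)
      have hf'inj : Function.Injective (fun i => (⟨f i, hfK i⟩ : Fin (chain K).m)) :=
        fun i j h => hfinj (congrArg Fin.val h)
      have hstem : StemIn b (chain K).q := by
        refine ⟨fun i => ⟨f i, hfK i⟩, hf'inj, ?_, ?_⟩
        · intro i j
          rw [hf i j]
          exact cle_iff K (f i) (f j) (hfK i) (hfK j)
        · intro i y hy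
          have hylt : climit.lt (y : ℕ) (f i) := by
            refine (ltc climit).2 ⟨?_, ?_⟩
            · exact (cle_iff K _ _ y.isLt (hfK i)).2 ((ltc _).1 hy).1
            · intro hle
              exact ((ltc _).1 hy).2 ((cle_iff K _ _ (hfK i) y.isLt).1 hle)
          obtain ⟨j, hj⟩ := hfd i (y : ℕ) hylt
          exact ⟨j, Fin.ext hj⟩
      have hnm : n ≤ (chain K).m := by
        have := Fintype.card_le_of_injective _ hf'inj
        simpa using this
      exact down hH hnm (chain K).q (chain K).mem ⟨b, hb, hstem⟩
    · intro B hB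
      obtain ⟨k, hk⟩ := hτ ⟨⟨n, B⟩, hB⟩
      have hq := (hchain k).2.2
      rw [hk] at hq
      exact qstem_trans hq (chain_stem (k+1))
  exact ⟨⟨climit, cnat⟩, fun n => (Nstems_eq n _).trans (main n)⟩

end Realize
/-- The metric space `(Ω/∼_R, d)` is complete (every Cauchy
sequence for `rdist` converges), and consequently, for every infinite path
`{Γ₁, Γ₂, …}` in covtree, the nested intersection `⋂ₙ [cert(Γₙ)]_R` contains
exactly one point. -/
theorem rogue_quotient_complete_and_cantor :
    (∀ u : ℕ → RQuot,
      (∀ ε > (0 : ℝ), ∃ N : ℕ, ∀ i ≥ N, ∀ j ≥ N, rdist (u i) (u j) < ε) →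
      ∃ x : RQuot, ∀ ε > (0 : ℝ), ∃ N : ℕ, ∀ i ≥ N, rdist (u i) x < ε) ∧
    ∀ P : CovPath, ∃! x : RQuot, ∀ n : ℕ, x ∈ certR (P.node n) := by
  constructor
  · -- completeness
    intro u hu
    choose A hA using fun i => Quotient.exists_rep (u i)
    have hpow : ∀ n : ℕ, (0:ℝ) < (2:ℝ)⁻¹ ^ n := fun n => by positivity
    choose N hN using fun n => hu ((2:ℝ)⁻¹ ^ n) (hpow n)
    set Nm : ℕ → ℕ := fun n => (Finset.range (n+1)).sup N with hNm_def
    have hNm : ∀ k n, k ≤ n → N k ≤ Nm n := fun k n h =>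
      Finset.le_sup (Finset.mem_range.2 (by omega))
    have key : ∀ k i, N k ≤ i → Nstems k (A i) = Nstems k (A (N k)) := by
      intro k i hi
      have h1 := hN k i hi (N k) le_rfl
      rw [← hA i, ← hA (N k), rdist_mk] at h1
      exact preDist_lt_imp h1 k le_rfl
    set Γ : ∀ n, Set (NOrder n) := fun n => Nstems n (A (N n)) with hΓ
    have hneΓ : ∀ n, (Γ n).Nonempty := by
      intro n
      obtain ⟨c, hc⟩ := Quotient.exists_rep (A (N n))
      show (Nstems n (A (N n))).Nonempty
      rw [← hc, Nstems_eq]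
      exact natCauset_stems_nonempty c n
    have hHΓ : HypH Γ := by
      intro M
      obtain ⟨c, hc⟩ := Quotient.exists_rep (A (Nm M))
      refine ⟨ℕ, c.val, natCauset_pf c, fun k hk => ?_⟩
      rw [← Nstems_eq, hc]
      exact key k (Nm M) (hNm k M hk)
    obtain ⟨cs, hcs⟩ := realize Γ hneΓ hHΓ
    refine ⟨(⟦(⟦cs⟧ : InfOrd)⟧ : RQuot), ?_⟩
    intro ε hε
    obtain ⟨n, hn⟩ := exists_pow_lt_of_lt_one hε (by norm_num : (2:ℝ)⁻¹ < 1)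
    refine ⟨Nm n, fun i hi => ?_⟩
    rw [← hA i]; change preDist (A i) (⟦cs⟧ : InfOrd) < ε
    have hagree : ∀ k ≤ n, Nstems k (A i) = Nstems k (⟦cs⟧ : InfOrd) := by
      intro k hk
      rw [hcs k]
      exact key k i (le_trans (hNm k n hk) hi)
    exact lt_of_le_of_lt (preDist_le hagree) hn
  · -- Cantor's intersection theorem for covtree paths
    intro P
    have hHΓ : HypH P.node := by
      intro M
      obtain ⟨-, α, p, -, hpf, hst⟩ := P.isNode M
      refine ⟨α, p, hpf, ?_⟩
      have main : ∀ d k, k + d = M → stems k p = P.node k := by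
        intro d
        induction d with
        | zero =>
          intro k hk
          rw [Nat.add_zero] at hk
          subst hk
          exact hst
        | succ d ih =>
          intro k hk
          have h1 : stems (k+1) p = P.node (k+1) := ih (k+1) (by omega)
          have h2 : (stems (k+1) p).Nonempty := by rw [h1]; exact P.nonempty (k+1)
          calc stems k p = Ominus (k+1) (stems (k+1) p) := (ominus_stems p hpf h2).symm
            _ = Ominus (k+1) (P.node (k+1)) := by rw [h1]
            _ = P.node k := P.link k
      exact fun k hk => main (M - k) k (by omega)
    obtain ⟨c, hc⟩ := realize P.node P.nonempty hHΓ
    refine ⟨(⟦(⟦c⟧ : InfOrd)⟧ : RQuot), fun n => ⟨(⟦c⟧ : InfOrd), hc n, rfl⟩, ?_⟩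
    intro y hy
    obtain ⟨Y, hY⟩ := Quotient.exists_rep y
    have hyc : ∀ n, Nstems n Y = Nstems n (⟦c⟧ : InfOrd) := by
      intro n
      obtain ⟨C, hC1, hC2⟩ := hy n
      have hrel : ∀ m, Nstems m C = Nstems m Y := Quotient.exact (hC2.trans hY.symm)
      rw [← hrel n, hC1, hc n]
    rw [← hY]
    exact Quotient.sound hyc
end
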